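/- For m = 2 and λ = (N, N), the function P̃ = P_z(N,N) · ∏_{1≤i<j≤2N}(z_i − z_j)^{m/(m+1)} with m = 2 satisfies the KZ equation at level 1; equivalently, P = P_z(N,N) satisfies (∂/∂z_i − (1/3)∑_{j≠i} Ω^{(i,j)}/(z_i − z_j)) P = P · ∑_{j≠i} a_{ij}/(z_i − z_j) with a_{ij} = −2/3 for all i ≠ j. -/

import Mathlib

open Finset

noncomputable section

/-- `P_z(N,N)` as a scalar-valued function of the `z`- and `y`-variables:
`∑_I (∏_{a∈I} y_a^{(1)}) (∏_{b∉I} y_b^{(2)}) / ∏_{a∈I, b∉I} (z_a - z_b)`,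
summed over `N`-element subsets `I` of `{1,…,2N}`. Here `y 0 a = y_a^{(1)}`,
`y 1 a = y_a^{(2)}`. -/
def Pfun (N : ℕ) (z : Fin (2 * N) → ℂ) (y : Fin 2 → Fin (2 * N) → ℂ) : ℂ :=
  ∑ I ∈ (Finset.univ : Finset (Fin (2 * N))).powersetCard N,
    ((∏ a ∈ I, y 0 a) * ∏ b ∈ Iᶜ, y 1 b) / ∏ a ∈ I, ∏ b ∈ Iᶜ, (z a - z b)

namespace KZaux

open Polynomial

variable {ι : Type*} [DecidableEq ι]

lemma derivative_prod_linear (s : Finset ι) (v : ι → ℂ) :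
    derivative (∏ b ∈ s, (X - C (v b))) = ∑ b ∈ s, ∏ c ∈ s.erase b, (X - C (v c)) := by
  induction s using Finset.induction_on with
  | empty => simp
  | @insert a s ha ih =>
    rw [Finset.prod_insert ha, derivative_mul, ih, Finset.sum_insert ha,
      Finset.erase_insert ha]
    simp only [derivative_sub, derivative_X, derivative_C, sub_zero, one_mul, Finset.mul_sum]
    congr 1
    refine Finset.sum_congr rfl fun b hb => ?_
    rw [Finset.erase_insert_of_ne (by rintro rfl; exact ha hb), Finset.prod_insert
      (fun h => ha (Finset.erase_subset _ _ h))]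


lemma prod_erase_eq (s : Finset ι) (f : ι → ℂ) {b : ι} (hb : b ∈ s) (h : f b ≠ 0) :
    ∏ c ∈ s.erase b, f c = (∏ c ∈ s, f c) * (f b)⁻¹ := by
  field_simp
  rw [mul_comm, Finset.mul_prod_erase s f hb]

lemma eval_derivative_prod_linear (s : Finset ι) (v : ι → ℂ) (x : ℂ)
    (h : ∀ b ∈ s, x - v b ≠ 0) :
    (derivative (∏ b ∈ s, (X - C (v b)))).eval x
      = (∏ b ∈ s, (x - v b)) * ∑ b ∈ s, (x - v b)⁻¹ := by
  rw [derivative_prod_linear, eval_finset_sum, Finset.mul_sum]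
  refine Finset.sum_congr rfl fun b hb => ?_
  rw [eval_prod]
  simp only [eval_sub, eval_X, eval_C]
  exact prod_erase_eq s (fun c => x - v c) hb (h b hb)


/-- Core partial-fraction identity coming from Lagrange interpolation. -/
lemma core (z : ι → ℂ) (A B : Finset ι) (x : ℂ)
    (hzB : Set.InjOn z B)
    (hA : ∀ a ∈ A, x - z a ≠ 0) (hB : ∀ b ∈ B, x - z b ≠ 0)
    (hBA : ∀ b ∈ B, ∀ a ∈ A, z b - z a ≠ 0)
    (hcard : A.card < B.card) :
    ∑ a ∈ A, (x - z a)⁻¹ - ∑ b ∈ B, (x - z b)⁻¹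
      = -∑ b ∈ B, ((∏ a ∈ A, (z b - z a)) * ∏ c ∈ B.erase b, (x - z c)) /
          ((∏ a ∈ A, (x - z a)) * (∏ c ∈ B.erase b, (z b - z c)) * (x - z b)) := by
  classical
  set G : ℂ[X] := ∏ a ∈ A, (X - C (z a)) with hG
  set w : ι → ℂ := fun b => (∏ a ∈ A, (z b - z a)) * (∏ c ∈ B.erase b, (z b - z c))⁻¹ with hw
  set gx : ℂ := ∏ a ∈ A, (x - z a) with hgx
  set hx : ℂ := ∏ b ∈ B, (x - z b) with hhx
  set SA : ℂ := ∑ a ∈ A, (x - z a)⁻¹ with hSA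
  set S1 : ℂ := ∑ b ∈ B, (x - z b)⁻¹ with hS1
  have hgx0 : gx ≠ 0 := Finset.prod_ne_zero_iff.mpr hA
  have hzbc : ∀ b ∈ B, ∀ c ∈ B.erase b, z b - z c ≠ 0 := by
    intro b hb c hc
    exact sub_ne_zero.mpr fun h => (Finset.mem_erase.mp hc).1 (hzB hb (Finset.mem_of_mem_erase hc) h).symm
  have hGdeg : G.degree < (B.card : WithBot ℕ) := by
    rw [hG, degree_prod]
    simp only [degree_X_sub_C, Finset.sum_const, nsmul_eq_mul, mul_one]
    exact_mod_cast hcard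
  have hQ : G = ∑ b ∈ B, C (w b) * ∏ c ∈ B.erase b, (X - C (z c)) := by
    have key := Lagrange.eq_interpolate (v := z) hzB hGdeg (f := G)
    rw [key, Lagrange.interpolate_apply]
    refine Finset.sum_congr rfl fun b hb => ?_
    rw [Lagrange.basis]
    simp only [Lagrange.basisDivisor]
    rw [Finset.prod_mul_distrib, ← map_prod, ← mul_assoc, ← C_mul]
    congr 2
    rw [hG, eval_prod]
    simp only [eval_sub, eval_X, eval_C]
    rw [Finset.prod_inv_distrib]
  -- evaluation of the Lagrange form at x
  have herase : ∀ b ∈ B, ∏ c ∈ B.erase b, (x - z c) = hx * (x - z b)⁻¹ := fun b hb =>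
    prod_erase_eq B (fun c => x - z c) hb (hB b hb)
  have hEval : gx = ∑ b ∈ B, w b * (hx * (x - z b)⁻¹) := by
    have := congrArg (eval x) hQ
    rw [hG, eval_prod] at this
    simp only [eval_sub, eval_X, eval_C, eval_finset_sum, eval_mul, eval_C, eval_prod] at this
    rw [hgx, this]
    exact Finset.sum_congr rfl fun b hb => by rw [herase b hb]
  -- derivative of G at x, two ways
  have hDer1 : (derivative G).eval x = gx * SA := by
    rw [hG]
    exact eval_derivative_prod_linear A z x hA
  have hDer2 : (derivative G).eval x
      = ∑ b ∈ B, w b * ((hx * (x - z b)⁻¹) * (S1 - (x - z b)⁻¹)) := by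
    rw [hQ, map_sum]
    rw [eval_finset_sum]
    refine Finset.sum_congr rfl fun b hb => ?_
    rw [derivative_C_mul, eval_mul, eval_C]
    congr 1
    rw [eval_derivative_prod_linear (B.erase b) z x
      (fun c hc => hB c (Finset.mem_of_mem_erase hc)), herase b hb,
      Finset.sum_erase_eq_sub hb, ← hS1]
  -- combine
  have hmain : gx * SA = S1 * gx - ∑ b ∈ B, w b * hx * ((x - z b)⁻¹ * (x - z b)⁻¹) := by
    rw [← hDer1, hDer2]
    have : ∀ b ∈ B, w b * ((hx * (x - z b)⁻¹) * (S1 - (x - z b)⁻¹))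
        = S1 * (w b * (hx * (x - z b)⁻¹)) - w b * hx * ((x - z b)⁻¹ * (x - z b)⁻¹) := by
      intro b hb; ring
    rw [Finset.sum_congr rfl this, Finset.sum_sub_distrib, ← Finset.mul_sum, ← hEval]
  have hterm : ∀ b ∈ B,
      ((∏ a ∈ A, (z b - z a)) * ∏ c ∈ B.erase b, (x - z c)) /
          ((∏ a ∈ A, (x - z a)) * (∏ c ∈ B.erase b, (z b - z c)) * (x - z b))
        = (w b * hx * ((x - z b)⁻¹ * (x - z b)⁻¹)) * gx⁻¹ := by
    intro b hb
    rw [herase b hb, hw, ← hgx]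
    have h1 : (x - z b) ≠ 0 := hB b hb
    have h2 : (∏ c ∈ B.erase b, (z b - z c)) ≠ 0 :=
      Finset.prod_ne_zero_iff.mpr (hzbc b hb)
    field_simp
  rw [Finset.sum_congr rfl hterm, ← Finset.sum_mul]
  have hsum : ∑ b ∈ B, w b * hx * ((x - z b)⁻¹ * (x - z b)⁻¹) = S1 * gx - gx * SA := by
    linear_combination hmain
  rw [hsum, sub_mul, mul_inv_cancel_right₀ hgx0, mul_comm gx SA,
    mul_inv_cancel_right₀ hgx0, ← neg_sub SA S1, neg_neg]

lemma derivative_prod_linear' (s : Finset ι) (v : ι → ℂ) :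
    derivative (∏ b ∈ s, (C (v b) - X)) = -∑ b ∈ s, ∏ c ∈ s.erase b, (C (v c) - X) := by
  induction s using Finset.induction_on with
  | empty => simp
  | @insert a s ha ih =>
    rw [Finset.prod_insert ha, derivative_mul, ih, Finset.sum_insert ha,
      Finset.erase_insert ha]
    simp only [derivative_sub, derivative_X, derivative_C, zero_sub, neg_mul, one_mul,
      mul_neg, Finset.mul_sum, neg_add]
    congr 1
    rw [← Finset.sum_neg_distrib, ← Finset.sum_neg_distrib]
    refine Finset.sum_congr rfl fun b hb => ?_
    rw [Finset.erase_insert_of_ne (by rintro rfl; exact ha hb), Finset.prod_insert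
      (fun h => ha (Finset.erase_subset _ _ h))]

lemma eval_derivative_prod_linear' (s : Finset ι) (v : ι → ℂ) (x : ℂ)
    (h : ∀ b ∈ s, x - v b ≠ 0) :
    (derivative (∏ b ∈ s, (C (v b) - X))).eval x
      = (∏ b ∈ s, (v b - x)) * ∑ b ∈ s, (x - v b)⁻¹ := by
  rw [derivative_prod_linear', eval_neg, eval_finset_sum]
  rw [show (∑ b ∈ s, (x - v b)⁻¹) = -∑ b ∈ s, (v b - x)⁻¹ by
    rw [← Finset.sum_neg_distrib]
    exact Finset.sum_congr rfl fun b hb => by rw [← inv_neg, neg_sub]]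
  rw [mul_neg, neg_inj, Finset.mul_sum]
  refine Finset.sum_congr rfl fun b hb => ?_
  rw [eval_prod]
  simp only [eval_sub, eval_X, eval_C]
  exact prod_erase_eq s (fun c => v c - x) hb (fun hc => h b hb (by
    rw [sub_eq_zero] at hc ⊢; exact hc.symm))

lemma image_fix {f : ι → ι} {s : Finset ι} (h : ∀ x ∈ s, f x = x) : s.image f = s := by
  rw [Finset.image_congr (g := id) (fun x hx => h x hx), Finset.image_id]

lemma image_swap_of_mem_not_mem {i b : ι} {I : Finset ι} (hi : i ∈ I) (hb : b ∉ I) :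
    I.image (Equiv.swap i b) = insert b (I.erase i) := by
  have hI : I = insert i (I.erase i) := (Finset.insert_erase hi).symm
  conv_lhs => rw [hI]
  rw [Finset.image_insert, Equiv.swap_apply_left]
  congr 1
  refine image_fix fun x hx => ?_
  have hxi : x ≠ i := (Finset.mem_erase.mp hx).1
  have hxb : x ≠ b := by rintro rfl; exact hb (Finset.mem_of_mem_erase hx)
  exact Equiv.swap_apply_of_ne_of_ne hxi hxb

lemma image_swap_same {i j : ι} {I : Finset ι} (h : i ∈ I ↔ j ∈ I) :
    I.image (Equiv.swap i j) = I := by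
  rcases eq_or_ne i j with rfl | hij
  · simp
  by_cases hi : i ∈ I
  · have hj : j ∈ I := h.mp hi
    have hI : I = insert i (insert j ((I.erase i).erase j)) := by
      rw [Finset.insert_erase (Finset.mem_erase.mpr ⟨(Ne.symm hij), hj⟩),
        Finset.insert_erase hi]
    conv_lhs => rw [hI]
    rw [Finset.image_insert, Finset.image_insert, Equiv.swap_apply_left,
      Equiv.swap_apply_right]
    rw [image_fix fun x hx => Equiv.swap_apply_of_ne_of_ne
        (Finset.mem_erase.mp (Finset.mem_of_mem_erase hx)).1 (Finset.mem_erase.mp hx).1,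
      Finset.insert_comm, ← hI]
  · have hj : j ∉ I := fun hj => hi (h.mpr hj)
    exact image_fix fun x hx => Equiv.swap_apply_of_ne_of_ne
      (by rintro rfl; exact hi hx) (by rintro rfl; exact hj hx)

variable [Fintype ι]

lemma compl_image_perm (e : Equiv.Perm ι) (I : Finset ι) :
    (I.image e)ᶜ = Iᶜ.image e := by
  ext x
  simp only [Finset.mem_compl, Finset.mem_image]
  constructor
  · intro hx
    exact ⟨e.symm x, fun h => hx ⟨e.symm x, h, e.apply_symm_apply x⟩, e.apply_symm_apply x⟩
  · rintro ⟨a, ha, rfl⟩ ⟨b, hb, hab⟩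
    exact ha (e.injective hab ▸ hb)

/-- The denominator product. -/
def Rd (z : ι → ℂ) (I : Finset ι) : ℂ := ∏ a ∈ I, ∏ b ∈ Iᶜ, (z a - z b)

lemma sub_ne_zero_of_inj {z : ι → ℂ} (hz : Function.Injective z) {a b : ι} (h : a ≠ b) :
    z a - z b ≠ 0 := sub_ne_zero.mpr fun hc => h (hz hc)

lemma Rd_ne_zero {z : ι → ℂ} (hz : Function.Injective z) (I : Finset ι) : Rd z I ≠ 0 :=
  Finset.prod_ne_zero_iff.mpr fun a ha => Finset.prod_ne_zero_iff.mpr fun b hb =>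
    sub_ne_zero_of_inj hz fun h => (Finset.mem_compl.mp hb) (h ▸ ha)

lemma div_helper (P S K c : ℂ) (hP : P ≠ 0) (hK : K ≠ 0) :
    -(c / (P * K)) * S = (c / K) * (-(P * S) / P ^ 2) := by
  field_simp

lemma hasDerivAt_term {z : ι → ℂ} (hz : Function.Injective z) (i : ι) (I : Finset ι) (c : ℂ) :
    HasDerivAt
      (fun t => c / ∏ a ∈ I, ∏ b ∈ Iᶜ,
        (Function.update z i t a - Function.update z i t b))
      (-(c / Rd z I) * ∑ j ∈ (if i ∈ I then Iᶜ else I), (z i - z j)⁻¹) (z i) := by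
  classical
  by_cases hi : i ∈ I
  · set K : ℂ := ∏ a ∈ I.erase i, ∏ b ∈ Iᶜ, (z a - z b) with hK
    set p : ℂ[X] := ∏ b ∈ Iᶜ, (X - C (z b)) with hp
    have hfac : ∀ t : ℂ, (∏ a ∈ I, ∏ b ∈ Iᶜ,
        (Function.update z i t a - Function.update z i t b)) = p.eval t * K := by
      intro t
      rw [← Finset.mul_prod_erase I _ hi]
      congr 1
      · rw [hp, eval_prod]
        refine Finset.prod_congr rfl fun b hb => ?_
        have hbi : b ≠ i := fun h => (Finset.mem_compl.mp hb) (h ▸ hi)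
        rw [Function.update_self, Function.update_of_ne hbi]
        simp
      · refine Finset.prod_congr rfl fun a ha => Finset.prod_congr rfl fun b hb => ?_
        rw [Function.update_of_ne (Finset.mem_erase.mp ha).1,
          Function.update_of_ne (fun h => (Finset.mem_compl.mp hb) (by rw [h]; exact hi))]
    have hnz : ∀ b ∈ Iᶜ, z i - z b ≠ 0 := fun b hb =>
      sub_ne_zero_of_inj hz (fun h => (Finset.mem_compl.mp hb) (h ▸ hi))
    have hpx : p.eval (z i) = ∏ b ∈ Iᶜ, (z i - z b) := by
      rw [hp, eval_prod]; simp
    have hpx0 : p.eval (z i) ≠ 0 := by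
      rw [hpx]; exact Finset.prod_ne_zero_iff.mpr hnz
    have hK0 : K ≠ 0 := Finset.prod_ne_zero_iff.mpr fun a ha =>
      Finset.prod_ne_zero_iff.mpr fun b hb =>
        sub_ne_zero_of_inj hz fun h => (Finset.mem_compl.mp hb) (h ▸ Finset.mem_of_mem_erase ha)
    have hRd : Rd z I = p.eval (z i) * K := by
      rw [Rd, ← hfac (z i), Function.update_eq_self]
    have hder : HasDerivAt (fun t => (c / K) * (p.eval t)⁻¹)
        ((c / K) * (-(p.derivative.eval (z i)) / (p.eval (z i)) ^ 2)) (z i) :=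
      ((p.hasDerivAt (z i)).inv hpx0).const_mul (c / K)
    have hfun : (fun t => c / ∏ a ∈ I, ∏ b ∈ Iᶜ,
        (Function.update z i t a - Function.update z i t b))
        = fun t => (c / K) * (p.eval t)⁻¹ := by
      funext t
      rw [hfac t, mul_comm, ← div_div, div_eq_mul_inv]
    rw [hfun, if_pos hi]
    convert hder using 1
    rw [hRd, show p.derivative.eval (z i) = (∏ b ∈ Iᶜ, (z i - z b)) * ∑ b ∈ Iᶜ, (z i - z b)⁻¹ from
      eval_derivative_prod_linear Iᶜ z (z i) hnz, hpx]
    exact div_helper _ _ _ _ (hpx ▸ hpx0) hK0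
  · set K : ℂ := ∏ a ∈ I, ∏ b ∈ Iᶜ.erase i, (z a - z b) with hK
    set q : ℂ[X] := ∏ a ∈ I, (C (z a) - X) with hq
    have hic : i ∈ Iᶜ := Finset.mem_compl.mpr hi
    have hfac : ∀ t : ℂ, (∏ a ∈ I, ∏ b ∈ Iᶜ,
        (Function.update z i t a - Function.update z i t b)) = q.eval t * K := by
      intro t
      rw [hq, eval_prod, ← Finset.prod_mul_distrib]
      refine Finset.prod_congr rfl fun a ha => ?_
      have hai : a ≠ i := fun h => hi (h ▸ ha)
      rw [← Finset.mul_prod_erase Iᶜ _ hic]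
      simp only [eval_sub, eval_X, eval_C]
      congr 1
      · rw [Function.update_of_ne hai, Function.update_self]
      · refine Finset.prod_congr rfl fun b hb => ?_
        rw [Function.update_of_ne hai, Function.update_of_ne (Finset.mem_erase.mp hb).1]
    have hnz : ∀ a ∈ I, z i - z a ≠ 0 := fun a ha =>
      sub_ne_zero_of_inj hz (fun h => hi (by rw [h]; exact ha))
    have hqx : q.eval (z i) = ∏ a ∈ I, (z a - z i) := by
      rw [hq, eval_prod]; simp
    have hqx0 : q.eval (z i) ≠ 0 := by
      rw [hqx]
      exact Finset.prod_ne_zero_iff.mpr fun a ha => fun h => hnz a ha (by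
        rw [sub_eq_zero] at h ⊢; exact h.symm)
    have hK0 : K ≠ 0 := Finset.prod_ne_zero_iff.mpr fun a ha =>
      Finset.prod_ne_zero_iff.mpr fun b hb =>
        sub_ne_zero_of_inj hz fun h => (Finset.mem_compl.mp (Finset.mem_of_mem_erase hb))
          (by rw [← h]; exact ha)
    have hRd : Rd z I = q.eval (z i) * K := by
      rw [Rd, ← hfac (z i), Function.update_eq_self]
    have hder : HasDerivAt (fun t => (c / K) * (q.eval t)⁻¹)
        ((c / K) * (-(q.derivative.eval (z i)) / (q.eval (z i)) ^ 2)) (z i) :=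
      ((q.hasDerivAt (z i)).inv hqx0).const_mul (c / K)
    have hfun : (fun t => c / ∏ a ∈ I, ∏ b ∈ Iᶜ,
        (Function.update z i t a - Function.update z i t b))
        = fun t => (c / K) * (q.eval t)⁻¹ := by
      funext t
      rw [hfac t, mul_comm, ← div_div, div_eq_mul_inv]
    rw [hfun, if_neg hi]
    convert hder using 1
    rw [hRd, show q.derivative.eval (z i) = (∏ a ∈ I, (z a - z i)) * ∑ a ∈ I, (z i - z a)⁻¹ from
      eval_derivative_prod_linear' I z (z i) hnz, ← hqx]
    exact div_helper _ _ _ _ hqx0 hK0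

lemma prod_pair (A : Finset ι) (f g : ι → ℂ) :
    (∏ a ∈ A, f a) * ∏ a ∈ A, g a = (∏ a ∈ A, -f a) * ∏ a ∈ A, -g a := by
  rw [← Finset.prod_mul_distrib, ← Finset.prod_mul_distrib]
  exact Finset.prod_congr rfl fun a _ => (neg_mul_neg _ _).symm

lemma star {z : ι → ℂ} (hz : Function.Injective z) (i : ι) (I : Finset ι)
    (hc : 2 * I.card = Fintype.card ι) :
    ∑ j ∈ (if i ∈ I then I.erase i else Iᶜ.erase i), (z i - z j)⁻¹
      - ∑ j ∈ (if i ∈ I then Iᶜ else I), (z i - z j)⁻¹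
    = Rd z I * ∑ j ∈ (if i ∈ I then Iᶜ else I),
        (Rd z (I.image (Equiv.swap i j)) * (z i - z j))⁻¹ := by
  classical
  by_cases hi : i ∈ I
  · simp only [if_pos hi]
    set A := I.erase i with hA
    have hAsub : ∀ a ∈ A, a ∈ I := fun a ha => Finset.mem_of_mem_erase ha
    have hAx : ∀ a ∈ A, z i - z a ≠ 0 := fun a ha =>
      sub_ne_zero_of_inj hz (Ne.symm (Finset.mem_erase.mp ha).1)
    have hBx : ∀ b ∈ Iᶜ, z i - z b ≠ 0 := fun b hb =>
      sub_ne_zero_of_inj hz (fun h => (Finset.mem_compl.mp hb) (by rw [← h]; exact hi))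
    have hBA : ∀ b ∈ Iᶜ, ∀ a ∈ A, z b - z a ≠ 0 := fun b hb a ha =>
      sub_ne_zero_of_inj hz (fun h => (Finset.mem_compl.mp hb) (by rw [h]; exact hAsub a ha))
    have hcard : A.card < Iᶜ.card := by
      rw [hA, Finset.card_erase_of_mem hi, Finset.card_compl]
      have h1 : 1 ≤ I.card := Finset.card_pos.mpr ⟨i, hi⟩
      omega
    rw [core z A Iᶜ (z i) (hz.injOn) hAx hBx hBA hcard, Finset.mul_sum,
      ← Finset.sum_neg_distrib]
    refine Finset.sum_congr rfl fun b hb => ?_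
    have hbI : b ∉ I := Finset.mem_compl.mp hb
    have hbA : b ∉ A := fun h => hbI (hAsub b h)
    have hiB : i ∉ Iᶜ.erase b := fun h => (Finset.mem_compl.mp (Finset.mem_of_mem_erase h)) hi
    have himg : I.image (Equiv.swap i b) = insert b A := image_swap_of_mem_not_mem hi hbI
    have hcompl : (insert b A)ᶜ = insert i (Iᶜ.erase b) := by
      rw [← himg, compl_image_perm, Equiv.swap_comm,
        image_swap_of_mem_not_mem (Finset.mem_compl.mpr hbI) (by simp [hi])]
    have hRdI : Rd z I = ((z i - z b) * ∏ c ∈ Iᶜ.erase b, (z i - z c)) *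
        ((∏ a ∈ A, (z a - z b)) * ∏ a ∈ A, ∏ c ∈ Iᶜ.erase b, (z a - z c)) := by
      rw [Rd, ← Finset.mul_prod_erase I _ hi, ← hA]
      congr 1
      · exact (Finset.mul_prod_erase Iᶜ _ hb).symm
      · rw [← Finset.prod_mul_distrib]
        exact Finset.prod_congr rfl fun a _ => (Finset.mul_prod_erase Iᶜ _ hb).symm
    have hRdσ : Rd z (I.image (Equiv.swap i b)) = ((z b - z i) * ∏ c ∈ Iᶜ.erase b, (z b - z c)) *
        ((∏ a ∈ A, (z a - z i)) * ∏ a ∈ A, ∏ c ∈ Iᶜ.erase b, (z a - z c)) := by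
      rw [Rd, himg, hcompl, Finset.prod_insert hbA, Finset.prod_insert hiB]
      congr 1
      rw [← Finset.prod_mul_distrib]
      exact Finset.prod_congr rfl fun a _ => Finset.prod_insert hiB
    have hpair : (∏ a ∈ A, (z a - z b)) * (∏ a ∈ A, (z i - z a))
        = (∏ a ∈ A, (z b - z a)) * (∏ a ∈ A, (z a - z i)) := by
      have := prod_pair A (fun a => z a - z b) (fun a => z i - z a)
      simpa [neg_sub] using this
    have hE : z i - z b ≠ 0 := hBx b hb
    have hden : (∏ a ∈ A, (z i - z a)) * (∏ c ∈ Iᶜ.erase b, (z b - z c)) * (z i - z b) ≠ 0 := by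
      refine mul_ne_zero (mul_ne_zero ?_ ?_) hE
      · exact Finset.prod_ne_zero_iff.mpr hAx
      · exact Finset.prod_ne_zero_iff.mpr fun c hc => sub_ne_zero_of_inj hz
          fun h => (Finset.mem_erase.mp hc).1 h.symm
    have hbden : Rd z (I.image (Equiv.swap i b)) * (z i - z b) ≠ 0 :=
      mul_ne_zero (Rd_ne_zero hz _) hE
    rw [← div_eq_mul_inv, neg_div']
    rw [div_eq_div_iff hden hbden, hRdI, hRdσ]
    linear_combination (-(z i - z b)^2 * (∏ c ∈ Iᶜ.erase b, (z i - z c)) *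
      (∏ c ∈ Iᶜ.erase b, (z b - z c)) * (∏ a ∈ A, ∏ c ∈ Iᶜ.erase b, (z a - z c))) * hpair
  · simp only [if_neg hi]
    set A := Iᶜ.erase i with hA
    have hiC : i ∈ Iᶜ := Finset.mem_compl.mpr hi
    have hAsub : ∀ a ∈ A, a ∈ Iᶜ := fun a ha => Finset.mem_of_mem_erase ha
    have hAx : ∀ a ∈ A, z i - z a ≠ 0 := fun a ha =>
      sub_ne_zero_of_inj hz (Ne.symm (Finset.mem_erase.mp ha).1)
    have hBx : ∀ b ∈ I, z i - z b ≠ 0 := fun b hb =>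
      sub_ne_zero_of_inj hz (fun h => hi (by rw [h]; exact hb))
    have hBA : ∀ b ∈ I, ∀ a ∈ A, z b - z a ≠ 0 := fun b hb a ha =>
      sub_ne_zero_of_inj hz (fun h => (Finset.mem_compl.mp (hAsub a ha)) (by rw [← h]; exact hb))
    have hcard : A.card < I.card := by
      rw [hA, Finset.card_erase_of_mem hiC, Finset.card_compl]
      have h1 : 1 ≤ Iᶜ.card := Finset.card_pos.mpr ⟨i, hiC⟩
      rw [Finset.card_compl] at h1
      omega
    rw [core z A I (z i) (hz.injOn) hAx hBx hBA hcard, Finset.mul_sum,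
      ← Finset.sum_neg_distrib]
    refine Finset.sum_congr rfl fun b hb => ?_
    have hbA : b ∉ A := fun h => (Finset.mem_compl.mp (hAsub b h)) hb
    have hiB0 : i ∉ I.erase b := fun h => hi (Finset.mem_of_mem_erase h)
    have hbib : b ∉ I.erase b := Finset.notMem_erase b I
    have himg : I.image (Equiv.swap i b) = insert i (I.erase b) := by
      rw [Equiv.swap_comm]
      exact image_swap_of_mem_not_mem hb hi
    have hcompl : (insert i (I.erase b))ᶜ = insert b A := by
      rw [← himg, compl_image_perm,
        image_swap_of_mem_not_mem hiC (fun h => Finset.mem_compl.mp h hb), ← hA]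
    have hRdI : Rd z I = ((z b - z i) * ∏ c ∈ A, (z b - z c)) *
        ((∏ a ∈ I.erase b, (z a - z i)) * ∏ a ∈ I.erase b, ∏ c ∈ A, (z a - z c)) := by
      rw [Rd, ← Finset.mul_prod_erase I _ hb]
      congr 1
      · exact (Finset.mul_prod_erase Iᶜ _ hiC).symm
      · rw [← Finset.prod_mul_distrib]
        exact Finset.prod_congr rfl fun a _ => (Finset.mul_prod_erase Iᶜ _ hiC).symm
    have hRdσ : Rd z (I.image (Equiv.swap i b)) = ((z i - z b) * ∏ c ∈ A, (z i - z c)) *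
        ((∏ a ∈ I.erase b, (z a - z b)) * ∏ a ∈ I.erase b, ∏ c ∈ A, (z a - z c)) := by
      rw [Rd, himg, hcompl, Finset.prod_insert hiB0, Finset.prod_insert hbA]
      congr 1
      rw [← Finset.prod_mul_distrib]
      exact Finset.prod_congr rfl fun a _ => Finset.prod_insert hbA
    have hpair : (∏ a ∈ I.erase b, (z a - z i)) * (∏ a ∈ I.erase b, (z b - z a))
        = (∏ a ∈ I.erase b, (z i - z a)) * (∏ a ∈ I.erase b, (z a - z b)) := by
      have := prod_pair (I.erase b) (fun a => z a - z i) (fun a => z b - z a)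
      simpa [neg_sub] using this
    have hE : z i - z b ≠ 0 := hBx b hb
    have hden : (∏ a ∈ A, (z i - z a)) * (∏ c ∈ I.erase b, (z b - z c)) * (z i - z b) ≠ 0 := by
      refine mul_ne_zero (mul_ne_zero ?_ ?_) hE
      · exact Finset.prod_ne_zero_iff.mpr hAx
      · exact Finset.prod_ne_zero_iff.mpr fun c hc => sub_ne_zero_of_inj hz
          fun h => (Finset.mem_erase.mp hc).1 h.symm
    have hbden : Rd z (I.image (Equiv.swap i b)) * (z i - z b) ≠ 0 :=
      mul_ne_zero (Rd_ne_zero hz _) hE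
    rw [← div_eq_mul_inv, neg_div']
    rw [div_eq_div_iff hden hbden, hRdI, hRdσ]
    linear_combination ((z i - z b)^2 * (∏ c ∈ A, (z i - z c)) *
      (∏ c ∈ A, (z b - z c)) * (∏ a ∈ I.erase b, ∏ c ∈ A, (z a - z c))) * hpair
  

end KZaux

open KZaux

lemma Pfun_eq (N : ℕ) (z : Fin (2 * N) → ℂ) (y : Fin 2 → Fin (2 * N) → ℂ) :
    Pfun N z y = ∑ I ∈ (Finset.univ : Finset (Fin (2 * N))).powersetCard N,
      ((∏ a ∈ I, y 0 a) * ∏ b ∈ Iᶜ, y 1 b) / Rd z I := rfl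

lemma Pfun_swap (N : ℕ) (z : Fin (2 * N) → ℂ) (y : Fin 2 → Fin (2 * N) → ℂ)
    (i j : Fin (2 * N)) :
    Pfun N z (fun k a => y k (Equiv.swap i j a))
      = ∑ I ∈ (Finset.univ : Finset (Fin (2 * N))).powersetCard N,
          ((∏ a ∈ I, y 0 a) * ∏ b ∈ Iᶜ, y 1 b) / Rd z (I.image (Equiv.swap i j)) := by
  rw [Pfun_eq]
  refine Finset.sum_nbij' (i := fun I => I.image (Equiv.swap i j))
    (j := fun I => I.image (Equiv.swap i j)) ?_ ?_ ?_ ?_ ?_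
  · intro I hI
    rw [Finset.mem_powersetCard_univ] at hI ⊢
    rw [Finset.card_image_of_injective _ (Equiv.injective _)]
    exact hI
  · intro I hI
    rw [Finset.mem_powersetCard_univ] at hI ⊢
    rw [Finset.card_image_of_injective _ (Equiv.injective _)]
    exact hI
  · intro I _
    rw [Finset.image_image]
    exact image_fix fun x _ => Equiv.swap_apply_self i j x
  · intro I _
    rw [Finset.image_image]
    exact image_fix fun x _ => Equiv.swap_apply_self i j x
  · intro I _
    rw [Finset.image_image,
      image_fix (f := (⇑(Equiv.swap i j)) ∘ (⇑(Equiv.swap i j)))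
        fun x _ => Equiv.swap_apply_self i j x,
      Finset.prod_image fun a _ b _ h => (Equiv.injective _) h, compl_image_perm,
      Finset.prod_image fun a _ b _ h => (Equiv.injective _) h]


/-- For `m = 2`, `P = P_z(N,N)` satisfies the level-one KZ equation in the form
`(∂/∂z_i - (1/3) ∑_{j≠i} Ω^{(i,j)}/(z_i - z_j)) P = P · ∑_{j≠i} (-2/3)/(z_i - z_j)`,
where `Ω^{(i,j)}` swaps the `y`-variables attached to the points `i` and `j`;
equivalently, `P̃ = P · ∏_{i<j} (z_i - z_j)^{2/3}` satisfies the KZ equations at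
level 1. -/
theorem P_satisfies_KZ_level_one
    (N : ℕ) (hN : 0 < N)
    (z : Fin (2 * N) → ℂ) (hz : Function.Injective z)
    (y : Fin 2 → Fin (2 * N) → ℂ) (i : Fin (2 * N)) :
    deriv (fun t => Pfun N (Function.update z i t) y) (z i) -
      (1 / 3) * ∑ j ∈ Finset.univ.erase i,
        Pfun N z (fun k a => y k (Equiv.swap i j a)) / (z i - z j) =
    Pfun N z y * ∑ j ∈ Finset.univ.erase i, (-2 / 3) / (z i - z j) := by
  classical
  set pcs := (Finset.univ : Finset (Fin (2 * N))).powersetCard N with hpcs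
  set cI : Finset (Fin (2 * N)) → ℂ :=
    fun I => (∏ a ∈ I, y 0 a) * ∏ b ∈ Iᶜ, y 1 b with hcI
  -- the derivative term
  have hder : HasDerivAt (fun t => Pfun N (Function.update z i t) y)
      (∑ I ∈ pcs, -(cI I / Rd z I) * ∑ j ∈ (if i ∈ I then Iᶜ else I), (z i - z j)⁻¹) (z i) := by
    have hfun : (fun t => Pfun N (Function.update z i t) y)
        = fun t => ∑ I ∈ pcs, cI I / ∏ a ∈ I, ∏ b ∈ Iᶜ,
            (Function.update z i t a - Function.update z i t b) := rfl
    rw [hfun]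
    exact HasDerivAt.fun_sum fun I _ => hasDerivAt_term hz i I (cI I)
  rw [hder.deriv]
  -- the swap term
  have hswap : (∑ j ∈ Finset.univ.erase i,
      Pfun N z (fun k a => y k (Equiv.swap i j a)) / (z i - z j))
      = ∑ I ∈ pcs, ∑ j ∈ Finset.univ.erase i,
          cI I / (Rd z (I.image (Equiv.swap i j)) * (z i - z j)) := by
    rw [Finset.sum_comm]
    refine Finset.sum_congr rfl fun j _ => ?_
    rw [Pfun_swap, Finset.sum_div]
    exact Finset.sum_congr rfl fun I _ => by rw [div_div]
  rw [hswap, Pfun_eq, Finset.sum_mul, Finset.mul_sum, ← Finset.sum_sub_distrib]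
  refine Finset.sum_congr rfl fun I hI => ?_
  have hIcard : I.card = N := Finset.mem_powersetCard_univ.mp hI
  have hc2 : 2 * I.card = Fintype.card (Fin (2 * N)) := by
    rw [hIcard, Fintype.card_fin]
  -- split the j-sum into the side of i and the opposite side
  have hsplit : Finset.univ.erase i
      = (if i ∈ I then I.erase i else Iᶜ.erase i) ∪ (if i ∈ I then Iᶜ else I) := by
    by_cases hi : i ∈ I
    · simp only [if_pos hi]
      ext x
      simp only [Finset.mem_erase, Finset.mem_union, Finset.mem_univ, and_true,
        Finset.mem_compl]
      constructor
      · intro hx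
        by_cases hxI : x ∈ I
        · exact Or.inl ⟨hx, hxI⟩
        · exact Or.inr hxI
      · rintro (⟨hx, _⟩ | hx)
        · exact hx
        · rintro rfl; exact hx hi
    · simp only [if_neg hi]
      ext x
      simp only [Finset.mem_erase, Finset.mem_union, Finset.mem_univ, and_true,
        Finset.mem_compl]
      constructor
      · intro hx
        by_cases hxI : x ∈ I
        · exact Or.inr hxI
        · exact Or.inl ⟨hx, hxI⟩
      · rintro (⟨hx, _⟩ | hx)
        · exact hx
        · rintro rfl; exact hi hx
  have hdisj : Disjoint (if i ∈ I then I.erase i else Iᶜ.erase i)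
      (if i ∈ I then Iᶜ else I) := by
    by_cases hi : i ∈ I
    · simp only [if_pos hi]
      exact Finset.disjoint_left.mpr fun x hx => Finset.notMem_compl.mpr
        (Finset.mem_of_mem_erase hx)
    · simp only [if_neg hi]
      exact Finset.disjoint_left.mpr fun x hx h =>
        Finset.mem_compl.mp (Finset.mem_of_mem_erase hx) h
  rw [hsplit, Finset.sum_union hdisj, Finset.sum_union hdisj]
  -- on the same side, the swap fixes I
  have hsame : ∀ j ∈ (if i ∈ I then I.erase i else Iᶜ.erase i),
      I.image (Equiv.swap i j) = I := by
    intro j hj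
    by_cases hi : i ∈ I
    · rw [if_pos hi] at hj
      exact image_swap_same (iff_of_true hi (Finset.mem_of_mem_erase hj))
    · rw [if_neg hi] at hj
      exact image_swap_same (iff_of_false hi
        (Finset.mem_compl.mp (Finset.mem_of_mem_erase hj)))
  have hsame2 : (∑ j ∈ (if i ∈ I then I.erase i else Iᶜ.erase i),
      cI I / (Rd z (I.image (Equiv.swap i j)) * (z i - z j)))
      = ∑ j ∈ (if i ∈ I then I.erase i else Iᶜ.erase i), cI I / (Rd z I * (z i - z j)) :=
    Finset.sum_congr rfl fun j hj => by rw [hsame j hj]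
  rw [hsame2]
  have hstar := star hz i I hc2
  set S1 := ∑ j ∈ (if i ∈ I then I.erase i else Iᶜ.erase i), (z i - z j)⁻¹ with hS1
  set S2 := ∑ j ∈ (if i ∈ I then Iᶜ else I), (z i - z j)⁻¹ with hS2
  set T := ∑ j ∈ (if i ∈ I then Iᶜ else I),
    (Rd z (I.image (Equiv.swap i j)) * (z i - z j))⁻¹ with hT
  have hR0 : Rd z I ≠ 0 := Rd_ne_zero hz I
  have e1 : (∑ j ∈ (if i ∈ I then I.erase i else Iᶜ.erase i), cI I / (Rd z I * (z i - z j)))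
      = cI I / Rd z I * S1 := by
    rw [hS1, Finset.mul_sum]
    exact Finset.sum_congr rfl fun j _ => by rw [div_mul_eq_div_div, div_eq_mul_inv (_ / _)]
  have e2 : (∑ j ∈ (if i ∈ I then Iᶜ else I),
      cI I / (Rd z (I.image (Equiv.swap i j)) * (z i - z j))) = cI I * T := by
    rw [hT, Finset.mul_sum]
    exact Finset.sum_congr rfl fun j _ => div_eq_mul_inv _ _
  have e3 : (∑ j ∈ (if i ∈ I then I.erase i else Iᶜ.erase i), (-2 / 3 : ℂ) / (z i - z j))
      = (-2 / 3) * S1 := by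
    rw [hS1, Finset.mul_sum]
    exact Finset.sum_congr rfl fun j _ => div_eq_mul_inv _ _
  have e4 : (∑ j ∈ (if i ∈ I then Iᶜ else I), (-2 / 3 : ℂ) / (z i - z j))
      = (-2 / 3) * S2 := by
    rw [hS2, Finset.mul_sum]
    exact Finset.sum_congr rfl fun j _ => div_eq_mul_inv _ _
  rw [e1, e2, e3, e4]
  have hTval : T = (S1 - S2) / Rd z I := by
    rw [eq_div_iff hR0, mul_comm]
    exact hstar.symm
  rw [hTval]
  field_simp
  ring


end
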